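/- The order function u ↦ ν(u) is locally constant on the amoeba complement: if u and u' lie in the same connected component E of ℝ^n ∖ 𝒜_p, then ν(u) = ν(u'). -/

import Mathlib

open MeasureTheory Real

noncomputable section

/-- Evaluation of the Laurent polynomial with support `A` and coefficients `c`
at the point `z`. -/
def lEval {n : ℕ} (A : Finset (Fin n → ℤ)) (c : (Fin n → ℤ) → ℂ)
    (z : Fin n → ℂ) : ℂ :=
  ∑ α ∈ A, c α * ∏ i, z i ^ α i

/-- The coordinatewise logarithm of moduli. -/
def logMap {n : ℕ} (z : Fin n → ℂ) : Fin n → ℝ :=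
  fun i => Real.log ‖z i‖

/-- The amoeba of the Laurent polynomial with support `A` and coefficients `c`. -/
def amoeba {n : ℕ} (A : Finset (Fin n → ℤ)) (c : (Fin n → ℤ) → ℂ) :
    Set (Fin n → ℝ) :=
  logMap '' {z | (∀ i, z i ≠ 0) ∧ lEval A c z = 0}

/-- The point of the complex torus with radial coordinates `e^u` and angles `θ`. -/
def tPt {n : ℕ} (u θ : Fin n → ℝ) : Fin n → ℂ :=
  fun i => Complex.exp (u i + θ i * Complex.I)

/-- The cube `[0, 2π]^n`. -/
def cube (n : ℕ) : Set (Fin n → ℝ) := Set.univ.pi fun _ => Set.Icc 0 (2 * π)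

/-- The order vector of a point `u` in the amoeba complement. -/
def order {n : ℕ} (A : Finset (Fin n → ℤ)) (c : (Fin n → ℤ) → ℂ)
    (u : Fin n → ℝ) : Fin n → ℂ := fun j =>
  (((2 * π) ^ n : ℝ) : ℂ)⁻¹ *
    ∫ θ in cube n,
      (∑ α ∈ A, c α * (α j : ℂ) * ∏ i, tPt u θ i ^ α i) / lEval A c (tPt u θ)

/-- The Ronkin function. -/
def ronkin {n : ℕ} (A : Finset (Fin n → ℤ)) (c : (Fin n → ℤ) → ℂ)
    (x : Fin n → ℝ) : ℝ :=
  ((2 * π) ^ n)⁻¹ * ∫ θ in cube n, Real.log ‖lEval A c (tPt x θ)‖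

/-- The Newton polytope of the support `A`. -/
def newton {n : ℕ} (A : Finset (Fin n → ℤ)) : Set (Fin n → ℝ) :=
  convexHull ℝ ((fun (α : Fin n → ℤ) (i : Fin n) => (α i : ℝ)) '' (A : Set (Fin n → ℤ)))

end

section lemmas
variable {n : ℕ} {A : Finset (Fin n → ℤ)} {c : (Fin n → ℤ) → ℂ} {u : Fin n → ℝ}

lemma logMap_tPt (u θ : Fin n → ℝ) : logMap (tPt u θ) = u := by
  funext i
  simp [logMap, tPt, Complex.norm_exp, Real.log_exp]

lemma tPt_ne_zero (u θ : Fin n → ℝ) (i : Fin n) : tPt u θ i ≠ 0 :=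
  Complex.exp_ne_zero _

lemma lEval_tPt_ne (h : u ∉ amoeba A c) (θ : Fin n → ℝ) :
    lEval A c (tPt u θ) ≠ 0 := fun h0 =>
  h ⟨tPt u θ, ⟨tPt_ne_zero u θ, h0⟩, logMap_tPt u θ⟩

lemma prod_tPt_zpow (u θ : Fin n → ℝ) (α : Fin n → ℤ) :
    (∏ i, tPt u θ i ^ α i) = Complex.exp (∑ i, (α i : ℂ) * (u i + θ i * Complex.I)) := by
  rw [Complex.exp_sum]
  exact Finset.prod_congr rfl fun i _ => by rw [tPt, Complex.exp_int_mul]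

lemma cube_eq (m : ℕ) : cube m = Set.Icc (0 : Fin m → ℝ) (fun _ => 2 * π) := by
  rw [← Set.pi_univ_Icc]; rfl

/-- The integrand of `order` is continuous in the angle when `u ∉ amoeba`. -/
lemma cont_integrand (hv : u ∉ amoeba A c) (j : Fin n) :
    Continuous (fun θ : Fin n → ℝ =>
      (∑ α ∈ A, c α * (α j : ℂ) * ∏ i, tPt u θ i ^ α i) / lEval A c (tPt u θ)) := by
  have hexp : ∀ (α : Fin n → ℤ), Continuous fun θ : Fin n → ℝ =>
      Complex.exp (∑ i, (α i : ℂ) * (u i + θ i * Complex.I)) := by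
    intro α
    apply Complex.continuous_exp.comp
    apply continuous_finset_sum
    intro i _
    exact continuous_const.mul (continuous_const.add
      ((Complex.continuous_ofReal.comp (continuous_apply i)).mul continuous_const))
  apply Continuous.div
  · simp only [prod_tPt_zpow]
    exact continuous_finset_sum _ fun α _ => continuous_const.mul (hexp α)
  · show Continuous fun θ : Fin n → ℝ => lEval A c (tPt u θ)
    unfold lEval
    simp only [prod_tPt_zpow]
    exact continuous_finset_sum _ fun α _ => continuous_const.mul (hexp α)
  · exact lEval_tPt_ne hv

lemma integrable_integrand (hv : u ∉ amoeba A c) (j : Fin n) :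
    IntegrableOn (fun θ : Fin n → ℝ =>
      (∑ α ∈ A, c α * (α j : ℂ) * ∏ i, tPt u θ i ^ α i) / lEval A c (tPt u θ))
      (Set.Icc 0 fun _ => 2*π) volume :=
  ((cont_integrand hv j).continuousOn).integrableOn_compact isCompact_Icc

end lemmas


lemma circle_aux {h : ℂ → ℂ} {a b : ℝ} (hab : a ≤ b)
    (hd : ∀ z : ℂ, Real.exp a ≤ ‖z‖ → ‖z‖ ≤ Real.exp b →
      DifferentiableAt ℂ h z) :
    (∫ θ in Set.Icc (0:ℝ) (2*π), h (Complex.exp (a + θ * Complex.I))) =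
      ∫ θ in Set.Icc (0:ℝ) (2*π), h (Complex.exp (b + θ * Complex.I)) := by
  have hmem : ∀ r θ : ℝ, circleMap 0 (Real.exp r) θ = Complex.exp (r + θ * Complex.I) := by
    intro r θ
    simp [circleMap, Complex.exp_add, ← Complex.ofReal_exp]
  have key : ∀ r : ℝ, (∮ z in C(0, Real.exp r), z⁻¹ * h z) =
      Complex.I * ∫ θ in Set.Icc (0:ℝ) (2*π), h (Complex.exp (r + θ * Complex.I)) := by
    intro r
    rw [circleIntegral_def_Icc, ← integral_const_mul]
    refine setIntegral_congr_fun measurableSet_Icc fun θ _ => ?_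
    rw [deriv_circleMap, hmem, smul_eq_mul]
    have hz : Complex.exp ((r:ℂ) + θ * Complex.I) ≠ 0 := Complex.exp_ne_zero _
    field_simp
  have hann : (∮ z in C(0, Real.exp b), z⁻¹ * h z) = ∮ z in C(0, Real.exp a), z⁻¹ * h z := by
    apply Complex.circleIntegral_eq_of_differentiable_on_annulus_off_countable (Real.exp_pos a)
      (Real.exp_le_exp.2 hab) Set.countable_empty
    · intro z hz
      simp only [Metric.mem_closedBall, Metric.mem_ball, Set.mem_diff, dist_zero_right,
        not_lt] at hz
      have hz0 : z ≠ 0 := by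
        intro h0; rw [h0] at hz; simp at hz
        nlinarith [Real.exp_pos a, hz.2]
      exact (((differentiableAt_inv hz0).mul (hd z hz.2 hz.1)).continuousAt).continuousWithinAt
    · intro z hz
      simp only [Metric.mem_ball, Metric.mem_closedBall, Set.mem_diff, dist_zero_right,
        not_le, Set.mem_empty_iff_false] at hz
      have hz' := hz.1
      have hz0 : z ≠ 0 := by
        intro h0; rw [h0] at hz'; simp at hz'
        nlinarith [Real.exp_pos a, hz'.2]
      exact ((differentiableAt_inv hz0).mul (hd z hz'.2.le hz'.1.le))
  have := (key b).symm.trans (hann.trans (key a))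
  exact (mul_left_cancel₀ Complex.I_ne_zero this).symm


lemma split {n : ℕ} (k : Fin (n+1)) (f : (Fin (n+1) → ℝ) → ℂ)
    (hf : IntegrableOn f (Set.Icc 0 fun _ => 2*π) volume) :
    (∫ θ in Set.Icc (0 : Fin (n+1) → ℝ) fun _ => 2*π, f θ)
      = ∫ y in Set.Icc (0 : Fin n → ℝ) fun _ => 2*π,
          ∫ x in Set.Icc (0:ℝ) (2*π), f (k.insertNth x y) := by
  set e : ℝ × (Fin n → ℝ) ≃ᵐ (Fin (n+1) → ℝ) :=
    (MeasurableEquiv.piFinSuccAbove (fun _ => ℝ) k).symm with he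
  have hem : MeasurePreserving e :=
    (volume_preserving_piFinSuccAbove (fun _ : Fin (n+1) => ℝ) k).symm _
  have heπ : (e ⁻¹' Set.Icc 0 fun _ => 2*π)
      = Set.Icc (0:ℝ) (2*π) ×ˢ Set.Icc (0 : Fin n → ℝ) fun _ => 2*π :=
    ((Fin.insertNthOrderIso (fun _ => ℝ) k).preimage_Icc _ _).trans (Set.Icc_prod_eq _ _)
  have hint : IntegrableOn (f ∘ e)
      ((Set.Icc (0:ℝ) (2*π)) ×ˢ (Set.Icc (0 : Fin n → ℝ) fun _ => 2*π)) volume := by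
    have := hf
    rwa [← hem.integrableOn_comp_preimage e.measurableEmbedding, heπ] at this
  rw [← hem.map_eq, setIntegral_map_equiv, heπ, Measure.volume_eq_prod, ← Measure.prod_restrict]
  rw [integral_prod_symm]
  · refine setIntegral_congr_fun measurableSet_Icc fun y _ => ?_
    refine setIntegral_congr_fun measurableSet_Icc fun x _ => ?_
    congr 1
  · rwa [Measure.prod_restrict, ← Measure.volume_eq_prod]

lemma step {n : ℕ} {A : Finset (Fin (n+1) → ℤ)} {c : (Fin (n+1) → ℤ) → ℂ}
    (k : Fin (n+1)) (v v' : Fin (n+1) → ℝ)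
    (hvv' : ∀ i, i ≠ k → v i = v' i)
    (hseg : ∀ s ∈ Set.uIcc (v k) (v' k), Function.update v k s ∉ amoeba A c) :
    order A c v = order A c v' := by
  have hv : v ∉ amoeba A c := by
    have := hseg (v k) Set.left_mem_uIcc
    rwa [Function.update_eq_self] at this
  have hv'eq : Function.update v k (v' k) = v' := by
    funext i
    rcases eq_or_ne i k with rfl | hik
    · simp
    · rw [Function.update_of_ne hik]; exact hvv' i hik
  have hv' : v' ∉ amoeba A c := by
    have := hseg (v' k) Set.right_mem_uIcc
    rwa [hv'eq] at this
  funext j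
  unfold order
  congr 1
  rw [cube_eq, split k _ (integrable_integrand hv j),
      split k _ (integrable_integrand hv' j)]
  refine setIntegral_congr_fun measurableSet_Icc fun y _ => ?_
  set w : Fin (n+1) → ℂ := tPt v (k.insertNth 0 y) with hw
  set Z : ℂ → Fin (n+1) → ℂ := fun z => Function.update w k z with hZ
  have hZoff : ∀ (x : ℝ) (vv : Fin (n+1) → ℝ), (∀ i, i ≠ k → vv i = v i) →
      tPt vv (k.insertNth x y) = Z (Complex.exp (vv k + x * Complex.I)) := by
    intro x vv hvv
    funext i
    rcases eq_or_ne i k with rfl | hik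
    · simp [hZ, tPt, Fin.insertNth_apply_same]
    · obtain ⟨l, rfl⟩ := Fin.exists_succAbove_eq hik
      rw [hZ]
      simp only [Function.update_of_ne hik]
      rw [hw, tPt, tPt]
      simp [Fin.insertNth_apply_succAbove, hvv _ hik]
  have h1 : ∀ x : ℝ, tPt v (k.insertNth x y) = Z (Complex.exp (v k + x * Complex.I)) :=
    fun x => hZoff x v (fun _ _ => rfl)
  have h2 : ∀ x : ℝ, tPt v' (k.insertNth x y) = Z (Complex.exp (v' k + x * Complex.I)) :=
    fun x => hZoff x v' (fun i hik => (hvv' i hik).symm)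
  simp only [h1, h2]
  have hprod : ∀ (zz : ℂ) (α : Fin (n+1) → ℤ), (∏ i, Z zz i ^ α i)
      = zz ^ α k * ∏ i ∈ Finset.univ.erase k, w i ^ α i := by
    intro zz α
    rw [← Finset.mul_prod_erase Finset.univ _ (Finset.mem_univ k)]
    congr 1
    · rw [hZ]; simp
    · exact Finset.prod_congr rfl fun i hi => by
        rw [hZ]; simp only [Function.update_of_ne (Finset.ne_of_mem_erase hi)]
  have main : ∀ a b : ℝ, a ≤ b → Set.Icc a b ⊆ Set.uIcc (v k) (v' k) →
      (∫ x in Set.Icc (0:ℝ) (2*π),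
        (∑ α ∈ A, c α * (α j : ℂ) * ∏ i, Z (Complex.exp (a + x * Complex.I)) i ^ α i) /
          lEval A c (Z (Complex.exp (a + x * Complex.I)))) =
      ∫ x in Set.Icc (0:ℝ) (2*π),
        (∑ α ∈ A, c α * (α j : ℂ) * ∏ i, Z (Complex.exp (b + x * Complex.I)) i ^ α i) /
          lEval A c (Z (Complex.exp (b + x * Complex.I))) := by
    intro a b hab hsub
    apply circle_aux (h := fun z =>
      (∑ α ∈ A, c α * (α j : ℂ) * ∏ i, Z z i ^ α i) / lEval A c (Z z)) hab
    intro z hza hzb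
    have habs : (0:ℝ) < ‖z‖ := lt_of_lt_of_le (Real.exp_pos a) hza
    have hz0 : z ≠ 0 := by
      intro h0; rw [h0] at habs; simp at habs
    have hlog1 : a ≤ Real.log (‖z‖) := (Real.le_log_iff_exp_le habs).2 hza
    have hlog2 : Real.log (‖z‖) ≤ b := (Real.log_le_iff_le_exp habs).2 hzb
    have hZne : ∀ i, Z z i ≠ 0 := by
      intro i
      rcases eq_or_ne i k with rfl | hik
      · rw [hZ]; simpa using hz0
      · rw [hZ]; simp only [Function.update_of_ne hik]; exact tPt_ne_zero _ _ i
    have hlogZ : logMap (Z z) = Function.update v k (Real.log (‖z‖)) := by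
      funext i
      rcases eq_or_ne i k with rfl | hik
      · rw [hZ, logMap]; simp
      · rw [logMap, hZ]
        simp only [Function.update_of_ne hik]
        exact congrFun (logMap_tPt v (k.insertNth 0 y)) i
    have hDen : lEval A c (Z z) ≠ 0 := by
      intro h0
      exact hseg (Real.log (‖z‖)) (hsub ⟨hlog1, hlog2⟩)
        ⟨Z z, ⟨hZne, h0⟩, hlogZ⟩
    have heq : (fun zz : ℂ =>
        (∑ α ∈ A, c α * (α j : ℂ) * ∏ i, Z zz i ^ α i) / lEval A c (Z zz))
        = fun zz => (∑ α ∈ A, c α * (α j : ℂ) *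
            (zz ^ α k * ∏ i ∈ Finset.univ.erase k, w i ^ α i)) /
          (∑ α ∈ A, c α * (zz ^ α k * ∏ i ∈ Finset.univ.erase k, w i ^ α i)) := by
      funext zz
      unfold lEval
      simp only [hprod]
    rw [heq]
    have hDen2 : (∑ α ∈ A, c α * (z ^ α k * ∏ i ∈ Finset.univ.erase k, w i ^ α i))
        = lEval A c (Z z) := by
      unfold lEval; simp only [hprod]
    apply DifferentiableAt.div
    · exact DifferentiableAt.fun_sum fun α _ =>
        (((differentiableAt_zpow.2 (Or.inl hz0)).mul_const _).const_mul _)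
    · exact DifferentiableAt.fun_sum fun α _ =>
        (((differentiableAt_zpow.2 (Or.inl hz0)).mul_const _).const_mul _)
    · rw [hDen2]; exact hDen
  rcases le_total (v k) (v' k) with hle | hle
  · exact main (v k) (v' k) hle (by rw [Set.uIcc_of_le hle])
  · exact (main (v' k) (v k) hle (by rw [Set.uIcc_of_ge hle])).symm

section open2
variable {n : ℕ} {A : Finset (Fin n → ℤ)} {c : (Fin n → ℤ) → ℂ} {u : Fin n → ℝ}

lemma exists_ball (hu : u ∉ amoeba A c) :
    ∃ ε > 0, Metric.ball u ε ⊆ (amoeba A c)ᶜ := by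
  classical
  set T : Set (Fin n → ℂ) :=
    Set.univ.pi (fun i => (norm : ℂ → ℝ) ⁻¹' Set.Icc (Real.exp (u i - 1)) (Real.exp (u i + 1)))
    with hT
  have hTc : IsCompact T := by
    refine isCompact_univ_pi fun i => ?_
    refine Metric.isCompact_of_isClosed_isBounded
      (isClosed_Icc.preimage continuous_norm) ?_
    refine (Metric.isBounded_closedBall (x := (0:ℂ)) (r := Real.exp (u i + 1))).subset ?_
    intro z hz
    exact Metric.mem_closedBall.2 (by simpa [Complex.dist_eq] using hz.2)
  have hTclosed : IsClosed T := hTc.isClosed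
  have hTpos : ∀ z ∈ T, ∀ i, z i ≠ 0 := by
    intro z hz i h0
    have := (hz i (Set.mem_univ i)).1
    rw [h0] at this
    simp at this
    linarith [Real.exp_pos (u i - 1)]
  have hcont : ∀ z : Fin n → ℂ, (∀ i, z i ≠ 0) → ContinuousAt (lEval A c) z := by
    intro z hz
    unfold lEval
    refine tendsto_finset_sum _ fun α _ => ?_
    refine Filter.Tendsto.const_mul _ ?_
    refine tendsto_finset_prod _ fun i _ => ?_
    exact Filter.Tendsto.comp (continuousAt_zpow₀ _ _ (Or.inl (hz i)))
      (continuous_apply i).continuousAt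
  set K : Set (Fin n → ℂ) := T ∩ {z | lEval A c z = 0} with hKdef
  have hKclosed : IsClosed K := by
    rw [← isOpen_compl_iff, isOpen_iff_mem_nhds]
    intro z hzc
    by_cases hzT : z ∈ T
    · have hne : lEval A c z ≠ 0 := fun h0 => hzc ⟨hzT, h0⟩
      have := (hcont z (hTpos z hzT)).eventually_ne hne
      exact this.mono fun w hw hww => hw hww.2
    · exact Filter.mem_of_superset (hTclosed.isOpen_compl.mem_nhds hzT)
        fun w hw hww => hw hww.1
  have hK : IsCompact K := hTc.of_isClosed_subset hKclosed Set.inter_subset_left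
  have hKpos : ∀ z ∈ K, ∀ i, z i ≠ 0 := fun z hz => hTpos z hz.1
  have himg : IsCompact (logMap '' K) := by
    refine hK.image_of_continuousOn ?_
    intro z hz
    refine (continuousAt_pi.2 fun i => ?_).continuousWithinAt
    refine Filter.Tendsto.comp (Real.continuousAt_log ?_)
      ((continuous_norm.comp (continuous_apply i)).continuousAt)
    exact (norm_ne_zero_iff.mpr (hKpos z hz i))
  have hnotin : u ∉ logMap '' K := by
    rintro ⟨z, hzK, hzu⟩
    exact hu ⟨z, ⟨hKpos z hzK, hzK.2⟩, hzu⟩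
  obtain ⟨ε, hε, hball⟩ :=
    Metric.mem_nhds_iff.1 ((himg.isClosed.isOpen_compl).mem_nhds hnotin)
  refine ⟨min ε 1, lt_min hε one_pos, ?_⟩
  intro x hx hxm
  obtain ⟨z, ⟨hz0, hzeval⟩, rfl⟩ := hxm
  have hd : dist (logMap z) u < min ε 1 := Metric.mem_ball.1 hx
  have hco : ∀ i, dist (logMap z i) (u i) < min ε 1 :=
    fun i => lt_of_le_of_lt (dist_le_pi_dist _ _ i) hd
  have hzT : z ∈ T := by
    intro i _
    have h1 : |Real.log (‖z i‖) - u i| < 1 :=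
      lt_of_lt_of_le (by simpa [logMap, Real.dist_eq] using hco i) (min_le_right ε 1)
    have hpos : 0 < ‖z i‖ := norm_pos_iff.mpr (hz0 i)
    obtain ⟨h2, h3⟩ := abs_lt.1 h1
    constructor
    · calc Real.exp (u i - 1) ≤ Real.exp (Real.log (‖z i‖)) :=
            Real.exp_le_exp.2 (by linarith)
        _ = ‖z i‖ := Real.exp_log hpos
    · calc ‖z i‖ = Real.exp (Real.log (‖z i‖)) :=
            (Real.exp_log hpos).symm
        _ ≤ Real.exp (u i + 1) := Real.exp_le_exp.2 (by linarith)
  have : logMap z ∈ logMap '' K := ⟨z, ⟨hzT, hzeval⟩, rfl⟩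
  exact hball (Metric.mem_ball.2 (lt_of_lt_of_le hd (min_le_left _ _))) this

end open2

lemma ball_const {n : ℕ} {A : Finset (Fin (n+1) → ℤ)} {c : (Fin (n+1) → ℤ) → ℂ}
    {u₀ : Fin (n+1) → ℝ} {ε : ℝ}
    (hball : Metric.ball u₀ ε ⊆ (amoeba A c)ᶜ) {v v' : Fin (n+1) → ℝ}
    (hv : v ∈ Metric.ball u₀ ε) (hv' : v' ∈ Metric.ball u₀ ε) :
    order A c v = order A c v' := by
  classical
  have hε : 0 < ε := lt_of_le_of_lt dist_nonneg (Metric.mem_ball.1 hv)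
  have hvco : ∀ i, dist (v i) (u₀ i) < ε := (dist_pi_lt_iff hε).1 (Metric.mem_ball.1 hv)
  have hv'co : ∀ i, dist (v' i) (u₀ i) < ε := (dist_pi_lt_iff hε).1 (Metric.mem_ball.1 hv')
  set wseq : ℕ → Fin (n+1) → ℝ := fun m i => if (i : ℕ) < m then v' i else v i with hwseq
  have claim : ∀ m, order A c v = order A c (wseq m) := by
    intro m
    induction m with
    | zero =>
      rw [show wseq 0 = v from funext fun i => if_neg (Nat.not_lt_zero _)]
    | succ m ih =>
      by_cases hm : m < n+1
      · set k : Fin (n+1) := ⟨m, hm⟩ with hk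
        have hupd : wseq (m+1) = Function.update (wseq m) k (v' k) := by
          funext i
          rcases eq_or_ne i k with rfl | hik
          · rw [Function.update_self]
            simp only [hwseq]
            rw [if_pos (by simp [hk])]
          · rw [Function.update_of_ne hik]
            have hne : (i:ℕ) ≠ m := fun h => hik (Fin.ext (by simp [hk, h]))
            simp only [hwseq]
            rcases Nat.lt_or_ge (i:ℕ) m with h | h
            · rw [if_pos h, if_pos (Nat.lt_succ_of_lt h)]
            · rw [if_neg (by omega), if_neg (by omega)]
        rw [ih, hupd]
        have hmemball : ∀ s ∈ Set.uIcc (v k) (v' k),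
            Function.update (wseq m) k s ∈ Metric.ball u₀ ε := by
          intro s hs
          rw [Metric.mem_ball, dist_pi_lt_iff hε]
          intro i
          rcases eq_or_ne i k with rfl | hik
          · rw [Function.update_self]
            have hb : Set.uIcc (v k) (v' k) ⊆ Metric.ball (u₀ k) ε :=
              ((convex_ball (u₀ k) ε).ordConnected).uIcc_subset
                (Metric.mem_ball.2 (hvco k)) (Metric.mem_ball.2 (hv'co k))
            exact Metric.mem_ball.1 (hb hs)
          · rw [Function.update_of_ne hik]
            simp only [hwseq]
            split_ifs
            · exact hv'co i
            · exact hvco i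
        apply step k
        · intro i hik; rw [Function.update_of_ne hik]
        · intro s hs
          rw [Function.update_self] at hs
          have hkv : wseq m k = v k := by
            simp only [hwseq]
            rw [if_neg (by simp [hk])]
          rw [hkv] at hs
          exact hball (hmemball s hs)
      · have heq : wseq (m+1) = wseq m := by
          funext i
          simp only [hwseq]
          rw [if_pos (by omega), if_pos (by omega : (i:ℕ) < m)]
        rw [heq]; exact ih
  have hfin : wseq (n+1) = v' := funext fun i => if_pos i.isLt
  rw [claim (n+1), hfin]


/-- The order function is constant on each connected component of the amoeba
complement: if `u` and `u'` lie in the same connected component of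
`ℝⁿ ∖ 𝒜_p`, then `ν(u) = ν(u')`. -/
theorem stmt_6 {n : ℕ} (A : Finset (Fin n → ℤ)) (c : (Fin n → ℤ) → ℂ)
    (hA : A.Nonempty) (hc : ∀ α ∈ A, c α ≠ 0)
    (u u' : Fin n → ℝ) (hu : u ∈ (amoeba A c)ᶜ)
    (hu' : u' ∈ connectedComponentIn (amoeba A c)ᶜ u) :
    order A c u = order A c u' := by
  classical
  cases n with
  | zero =>
    have : u = u' := funext fun i => i.elim0
    rw [this]
  | succ m =>
    choose! ε hε hball using
      fun (w : Fin (m+1) → ℝ) (hw : w ∉ amoeba A c) => exists_ball hw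
    set C := connectedComponentIn (amoeba A c)ᶜ u with hC
    have hCsub : C ⊆ (amoeba A c)ᶜ := connectedComponentIn_subset _ _
    have hCpre : IsPreconnected C := isPreconnected_connectedComponentIn
    by_contra hne
    set U : Set (Fin (m+1) → ℝ) :=
      ⋃ (w : {w // w ∈ C ∧ order A c w = order A c u}), Metric.ball w.1 (ε w.1) with hU
    set V : Set (Fin (m+1) → ℝ) :=
      ⋃ (w : {w // w ∈ C ∧ order A c w ≠ order A c u}), Metric.ball w.1 (ε w.1) with hV
    have hUopen : IsOpen U := isOpen_iUnion fun w => Metric.isOpen_ball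
    have hVopen : IsOpen V := isOpen_iUnion fun w => Metric.isOpen_ball
    have hCUV : C ⊆ U ∪ V := by
      intro w hw
      by_cases h : order A c w = order A c u
      · exact Or.inl (Set.mem_iUnion.2 ⟨⟨w, hw, h⟩, Metric.mem_ball_self (hε w (hCsub hw))⟩)
      · exact Or.inr (Set.mem_iUnion.2 ⟨⟨w, hw, h⟩, Metric.mem_ball_self (hε w (hCsub hw))⟩)
    have huC : u ∈ C := mem_connectedComponentIn hu
    have hCU : (C ∩ U).Nonempty :=
      ⟨u, huC, Set.mem_iUnion.2 ⟨⟨u, huC, rfl⟩, Metric.mem_ball_self (hε u hu)⟩⟩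
    have hCV : (C ∩ V).Nonempty :=
      ⟨u', hu', Set.mem_iUnion.2 ⟨⟨u', hu', fun h => hne h.symm⟩,
        Metric.mem_ball_self (hε u' (hCsub hu'))⟩⟩
    obtain ⟨x, hxC, hxU, hxV⟩ := hCpre U V hUopen hVopen hCUV hCU hCV
    obtain ⟨⟨w1, hw1C, hw1⟩, hx1⟩ := Set.mem_iUnion.1 hxU
    obtain ⟨⟨w2, hw2C, hw2⟩, hx2⟩ := Set.mem_iUnion.1 hxV
    have e1 : order A c x = order A c w1 :=
      ball_const (hball w1 (hCsub hw1C)) hx1 (Metric.mem_ball_self (hε w1 (hCsub hw1C)))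
    have e2 : order A c x = order A c w2 :=
      ball_const (hball w2 (hCsub hw2C)) hx2 (Metric.mem_ball_self (hε w2 (hCsub hw2C)))
    exact hw2 (by rw [← e2, e1, hw1])
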